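/- Let p ∈ (1/2, 1) and d = p/(1−p) > 1, and let ε₀, ε₁ be i.i.d. random variables each equal to −1 with probability p and to d with probability 1 − p (so E[εₓ] = 0). Fix c₁ = 0 and c₀ > 0, β₁ > 0, β₀ ∈ ℝ such that β₁ < √(2c₀), d + 1 − β₁ < √(2c₀) ≤ d + 1 + β₁, and β₁ < d − 1. Define b₁ = β₁ + ε₁ − ε₀ if (β₁ + ε₁ − ε₀)² ≥ 2c₀ and b₁ = 0 otherwise, and b₀ = (y₀ + y₁ − b₁)/2 with y₀ = β₀ + ε₀, y₁ = β₀ + β₁ + ε₁. Then E[(b₀ + b₁ − β₀ − β₁)²] > E[(b₀ − β₀ − β₁)²]: an agent with characteristic x = 1 is strictly better off misreporting r = 0, so the estimator is not incentive-compatible. -/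

import Mathlib

open MeasureTheory ProbabilityTheory
open scoped ENNReal NNReal

lemma nnsmul_eq {α : Type*} [MeasurableSpace α] (c : ℝ≥0) (μ : Measure α) :
    ((c : ℝ≥0∞) • μ) = c • μ := by
  ext s hs
  simp only [Measure.smul_apply, ENNReal.smul_def]

lemma smul_prod' {α β : Type*} [MeasurableSpace α] [MeasurableSpace β]
    (c c' : ℝ≥0) (μ : Measure α) (ν : Measure β) [SigmaFinite μ] [SigmaFinite ν] :
    ((c : ℝ≥0∞) • μ).prod ((c' : ℝ≥0∞) • ν) = ((c * c' : ℝ≥0) : ℝ≥0∞) • μ.prod ν := by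
  rw [nnsmul_eq, nnsmul_eq]
  refine (Measure.prod_eq fun s t hs ht => ?_)
  simp only [Measure.smul_apply, smul_eq_mul, Measure.prod_prod, ENNReal.coe_mul,
    ENNReal.smul_def]
  ring

lemma integrable_dirac'' {α : Type*} [MeasurableSpace α] [MeasurableSingletonClass α]
    {f : α → ℝ} (hf : Measurable f) (x : α) :
    Integrable f (Measure.dirac x) := by
  have h : f =ᵐ[Measure.dirac x] fun _ => f x := by
    rw [MeasureTheory.ae_dirac_eq]
    exact Filter.eventually_pure.2 rfl
  exact (integrable_const (f x)).congr h.symm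

lemma key {Ω : Type*} [MeasurableSpace Ω] (μ : Measure Ω) [IsProbabilityMeasure μ]
    (p d : ℝ) (hp0 : 0 ≤ p) (hp1 : p ≤ 1)
    (ε₀ ε₁ : Ω → ℝ)
    (hmeas₀ : Measurable ε₀) (hmeas₁ : Measurable ε₁)
    (hindep : IndepFun ε₀ ε₁ μ)
    (hdist₀ : μ.map ε₀ =
      ENNReal.ofReal p • Measure.dirac (-1 : ℝ)
        + ENNReal.ofReal (1 - p) • Measure.dirac d)
    (hdist₁ : μ.map ε₁ =
      ENNReal.ofReal p • Measure.dirac (-1 : ℝ)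
        + ENNReal.ofReal (1 - p) • Measure.dirac d)
    (G : ℝ × ℝ → ℝ) (hG : Measurable G) :
    ∫ ω, G (ε₀ ω, ε₁ ω) ∂μ =
      p*p*G (-1,-1) + p*(1-p)*G (-1,d) + (1-p)*p*G (d,-1) + (1-p)*(1-p)*G (d,d) := by
  have hpair : Measurable (fun ω => (ε₀ ω, ε₁ ω)) := hmeas₀.prodMk hmeas₁
  have h0 : ∫ ω, G (ε₀ ω, ε₁ ω) ∂μ = ∫ x, G x ∂(μ.map (fun ω => (ε₀ ω, ε₁ ω))) :=
    (integral_map hpair.aemeasurable hG.aestronglyMeasurable).symm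
  rw [h0, (indepFun_iff_map_prod_eq_prod_map_map hmeas₀.aemeasurable hmeas₁.aemeasurable).mp
    hindep, hdist₀, hdist₁]
  have hoR : ∀ q : ℝ, ENNReal.ofReal q = ((q.toNNReal : ℝ≥0) : ℝ≥0∞) := fun q => rfl
  rw [hoR p, hoR (1-p)]
  rw [Measure.add_prod, Measure.prod_add, Measure.prod_add]
  rw [smul_prod', smul_prod', smul_prod', smul_prod']
  rw [Measure.dirac_prod_dirac, Measure.dirac_prod_dirac, Measure.dirac_prod_dirac,
    Measure.dirac_prod_dirac]
  have hint : ∀ (c : ℝ≥0) (x : ℝ × ℝ), Integrable G (((c : ℝ≥0∞)) • Measure.dirac x) :=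
    fun c x => (integrable_dirac'' hG x).smul_measure ENNReal.coe_ne_top
  rw [integral_add_measure ((hint _ _).add_measure (hint _ _))
      ((hint _ _).add_measure (hint _ _)),
    integral_add_measure (hint _ _) (hint _ _), integral_add_measure (hint _ _) (hint _ _)]
  rw [integral_smul_measure, integral_smul_measure, integral_smul_measure, integral_smul_measure]
  rw [integral_dirac, integral_dirac, integral_dirac, integral_dirac]
  simp only [ENNReal.coe_mul, ENNReal.toReal_mul, smul_eq_mul]
  rw [ENNReal.coe_toReal, ENNReal.coe_toReal, Real.coe_toNNReal _ hp0,
    Real.coe_toNNReal _ (by linarith : (0:ℝ) ≤ 1 - p)]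
  ring

theorem stmt8 {Ω : Type*} [MeasurableSpace Ω] (μ : Measure Ω)
    [IsProbabilityMeasure μ]
    (p d : ℝ) (hp : 1 / 2 < p ∧ p < 1) (hd : d = p / (1 - p))
    (ε₀ ε₁ : Ω → ℝ)
    (hmeas₀ : Measurable ε₀) (hmeas₁ : Measurable ε₁)
    (hindep : IndepFun ε₀ ε₁ μ)
    (hdist₀ : μ.map ε₀ =
      ENNReal.ofReal p • Measure.dirac (-1 : ℝ)
        + ENNReal.ofReal (1 - p) • Measure.dirac d)
    (hdist₁ : μ.map ε₁ =
      ENNReal.ofReal p • Measure.dirac (-1 : ℝ)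
        + ENNReal.ofReal (1 - p) • Measure.dirac d)
    (β₀ β₁ c₀ : ℝ) (hc₀ : 0 < c₀) (hβ₁ : 0 < β₁)
    (h1 : β₁ < Real.sqrt (2 * c₀))
    (h2 : d + 1 - β₁ < Real.sqrt (2 * c₀))
    (h3 : Real.sqrt (2 * c₀) ≤ d + 1 + β₁)
    (h4 : β₁ < d - 1)
    (b₁ : Ω → ℝ)
    (hb₁ : ∀ ω, b₁ ω =
      if 2 * c₀ ≤ (β₁ + ε₁ ω - ε₀ ω) ^ 2 then β₁ + ε₁ ω - ε₀ ω else 0)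
    (y₀ y₁ b₀ : Ω → ℝ)
    (hy₀ : ∀ ω, y₀ ω = β₀ + ε₀ ω) (hy₁ : ∀ ω, y₁ ω = β₀ + β₁ + ε₁ ω)
    (hb₀ : ∀ ω, b₀ ω = (y₀ ω + y₁ ω - b₁ ω) / 2) :
    ∫ ω, (b₀ ω - β₀ - β₁) ^ 2 ∂μ <
      ∫ ω, (b₀ ω + b₁ ω - β₀ - β₁) ^ 2 ∂μ := by
  obtain ⟨hp2, hp1'⟩ := hp
  have hp0 : 0 ≤ p := by linarith
  have hp1 : p ≤ 1 := le_of_lt hp1'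
  set s := Real.sqrt (2 * c₀) with hs
  have hs0 : 0 ≤ s := Real.sqrt_nonneg _
  have hs2 : s ^ 2 = 2 * c₀ := Real.sq_sqrt (by linarith)
  set F : ℝ × ℝ → ℝ := fun x =>
    if 2 * c₀ ≤ (β₁ + x.2 - x.1) ^ 2 then β₁ + x.2 - x.1 else 0 with hFdef
  have hset : MeasurableSet {x : ℝ × ℝ | 2 * c₀ ≤ (β₁ + x.2 - x.1) ^ 2} :=
    measurableSet_le measurable_const (by fun_prop)
  have hFmeas : Measurable F := Measurable.ite hset (by fun_prop) measurable_const
  set G₀ : ℝ × ℝ → ℝ := fun x => ((x.1 + x.2 - β₁ - F x) / 2) ^ 2 with hG₀def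
  set G₁ : ℝ × ℝ → ℝ := fun x => ((x.1 + x.2 - β₁ + F x) / 2) ^ 2 with hG₁def
  have hG₀meas : Measurable G₀ := by fun_prop
  have hG₁meas : Measurable G₁ := by fun_prop
  have hF : ∀ ω, b₁ ω = F (ε₀ ω, ε₁ ω) := fun ω => hb₁ ω
  have e0 : ∀ ω, (b₀ ω - β₀ - β₁) ^ 2 = G₀ (ε₀ ω, ε₁ ω) := by
    intro ω
    rw [hb₀, hy₀, hy₁, hF]
    show _ = ((ε₀ ω + ε₁ ω - β₁ - F (ε₀ ω, ε₁ ω)) / 2) ^ 2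
    ring
  have e1 : ∀ ω, (b₀ ω + b₁ ω - β₀ - β₁) ^ 2 = G₁ (ε₀ ω, ε₁ ω) := by
    intro ω
    rw [hb₀, hy₀, hy₁, hF]
    show _ = ((ε₀ ω + ε₁ ω - β₁ + F (ε₀ ω, ε₁ ω)) / 2) ^ 2
    ring
  have hL : ∫ ω, (b₀ ω - β₀ - β₁) ^ 2 ∂μ = ∫ ω, G₀ (ε₀ ω, ε₁ ω) ∂μ :=
    integral_congr_ae (Filter.Eventually.of_forall e0)
  have hR : ∫ ω, (b₀ ω + b₁ ω - β₀ - β₁) ^ 2 ∂μ = ∫ ω, G₁ (ε₀ ω, ε₁ ω) ∂μ :=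
    integral_congr_ae (Filter.Eventually.of_forall e1)
  rw [hL, hR,
    key μ p d hp0 hp1 ε₀ ε₁ hmeas₀ hmeas₁ hindep hdist₀ hdist₁ G₀ hG₀meas,
    key μ p d hp0 hp1 ε₀ ε₁ hmeas₀ hmeas₁ hindep hdist₀ hdist₁ G₁ hG₁meas]
  -- values of F at the four points
  have hF11 : F (-1, -1) = 0 := by
    rw [hFdef]
    simp only
    rw [if_neg]
    push_neg
    nlinarith
  have hF1d : F (-1, d) = β₁ + d + 1 := by
    rw [hFdef]
    simp only
    rw [if_pos]
    · ring
    · nlinarith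
  have hFd1 : F (d, -1) = 0 := by
    rw [hFdef]
    simp only
    rw [if_neg]
    push_neg
    nlinarith
  have hFdd : F (d, d) = 0 := by
    rw [hFdef]
    simp only
    rw [if_neg]
    push_neg
    nlinarith
  rw [hG₀def, hG₁def]
  simp only [hF11, hF1d, hFd1, hFdd]
  have hdgt : 1 + β₁ < d := by linarith
  have hpq : (0:ℝ) < p * (1 - p) := mul_pos (by linarith) (by linarith)
  nlinarith [mul_pos (mul_pos hpq (by linarith : (0:ℝ) < d - (1 + β₁)))
    (by linarith : (0:ℝ) < d + (1 + β₁))]
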